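/- Let (E,τ) be a real locally convex space such that E endowed with the weak topology σ(E,E') is a μ-space. If every subset of E compact in σ(E,E') is compact in τ, then every subset of E that is functionally bounded in σ(E,E') has compact closure in (E,τ); in particular, every subset of E countably compact in σ(E,E') is countably compact in τ, and (E,τ) is a μ-space. -/

import Mathlib

open Filter Topology Bornology

/-- The weak topology σ(E,E') on a (locally convex) topological vector space `E`:
the initial topology with respect to all continuous linear functionals on `E`. -/
def weakTop (E : Type*) [AddCommGroup E] [Module ℝ E] [TopologicalSpace E] :
    TopologicalSpace E :=
  TopologicalSpace.induced (fun x (f : E →L[ℝ] ℝ) => f x) Pi.topologicalSpace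

/-- A set `A` is functionally bounded for the topology `t` if every `t`-continuous
real-valued function is bounded on `A`. -/
def FunBounded {E : Type*} (t : TopologicalSpace E) (A : Set E) : Prop :=
  ∀ f : E → ℝ, @Continuous E ℝ t _ f → ∃ C : ℝ, ∀ x ∈ A, |f x| ≤ C

/-- The Schur property: every sequence converging in the weak topology σ(E,E') to a point
converges to that point in the original topology. -/
def HasSchur (E : Type*) [AddCommGroup E] [Module ℝ E] [TopologicalSpace E] : Prop :=
  ∀ (u : ℕ → E) (a : E),
    Filter.Tendsto u Filter.atTop (@nhds E (weakTop E) a) →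
    Filter.Tendsto u Filter.atTop (nhds a)

/-- A set `A` is countably compact for the topology `t` if every sequence in `A` has a
cluster point belonging to `A`. -/
def CountablyCompactIn {E : Type*} (t : TopologicalSpace E) (A : Set E) : Prop :=
  ∀ u : ℕ → E, (∀ n, u n ∈ A) → ∃ a ∈ A, @MapClusterPt E t ℕ a Filter.atTop u

section Aux

variable {E : Type*} [AddCommGroup E] [Module ℝ E] [τ : TopologicalSpace E]

/-- The original topology is finer than the weak topology. -/
lemma tau_le_weakTop : τ ≤ weakTop E := by
  rw [weakTop, ← continuous_iff_le_induced]
  exact continuous_pi fun f => f.continuous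

/-- Every continuous linear functional is continuous for the weak topology. -/
lemma weak_cont (f : E →L[ℝ] ℝ) : @Continuous E ℝ (weakTop E) _ f := by
  have h1 : @Continuous E ((E →L[ℝ] ℝ) → ℝ) (weakTop E) _ (fun x g => g x) :=
    continuous_induced_dom
  exact @Continuous.comp E ((E →L[ℝ] ℝ) → ℝ) ℝ (weakTop E) _ _
    (fun x g => g x) (fun g => g f) (continuous_apply f) h1

end Aux

/-- Let `E` be a real locally convex space such that `E` with the weak
topology is a μ-space. If `E` weakly respects compactness, then every weakly functionally
bounded set has compact closure in `E`; in particular `E` weakly respects countable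
compactness and `E` is a μ-space. -/
theorem weakly_respects_compactness_implies_funBounded_rel_compact
    (E : Type*) [AddCommGroup E] [Module ℝ E] [τ : TopologicalSpace E]
    [IsTopologicalAddGroup E] [ContinuousSMul ℝ E] [LocallyConvexSpace ℝ E]
    (hμw : ∀ A : Set E, FunBounded (weakTop E) A →
      @IsCompact E (weakTop E) (@closure E (weakTop E) A))
    (h : ∀ A : Set E, @IsCompact E (weakTop E) A → IsCompact A) :
    (∀ A : Set E, FunBounded (weakTop E) A → IsCompact (closure A)) ∧
    (∀ A : Set E, CountablyCompactIn (weakTop E) A → CountablyCompactIn τ A) ∧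
    (∀ A : Set E, FunBounded τ A → IsCompact (closure A)) := by
  have hle : τ ≤ weakTop E := tau_le_weakTop
  have hid : @Continuous E E τ (weakTop E) id := continuous_id_of_le hle
  -- τ-closure is contained in the weak closure
  have hcl : ∀ A : Set E, closure A ⊆ @closure E (weakTop E) A := by
    intro A
    have h1 : @IsClosed E (weakTop E) (@closure E (weakTop E) A) :=
      @isClosed_closure E (weakTop E) A
    have h2 : IsClosed (@closure E (weakTop E) A) := by
      have := @IsClosed.preimage E E τ (weakTop E) id hid _ h1
      simpa using this
    exact closure_minimal (@subset_closure E (weakTop E) A) h2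
  -- Part 1
  have P1 : ∀ A : Set E, FunBounded (weakTop E) A → IsCompact (closure A) := by
    intro A hA
    exact (h _ (hμw A hA)).of_isClosed_subset isClosed_closure (hcl A)
  refine ⟨P1, ?_, ?_⟩
  · -- Part 2: weak countable compactness implies countable compactness
    intro A hA
    -- A is weakly functionally bounded
    have hfb : FunBounded (weakTop E) A := by
      intro f hf
      by_contra hC
      push_neg at hC
      choose u hu1 hu2 using fun n : ℕ => hC n
      obtain ⟨a, _, hclp⟩ := hA u hu1
      have hne : (@nhds E (weakTop E) a ⊓ map u atTop).NeBot := hclp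
      have hmap : (map f (@nhds E (weakTop E) a ⊓ map u atTop)).NeBot := hne.map f
      have hle2 : map f (@nhds E (weakTop E) a ⊓ map u atTop) ≤
          nhds (f a) ⊓ map (f ∘ u) atTop := by
        refine le_inf ?_ ?_
        · exact le_trans (map_mono inf_le_left)
            (@Continuous.tendsto E ℝ (weakTop E) _ f hf a)
        · rw [← Filter.map_map]
          exact map_mono inf_le_right
      have hcp : ClusterPt (f a) (map (f ∘ u) atTop) := hmap.mono hle2
      set N : ℕ := ⌈|f a| + 1⌉₊ with hN
      have hU : {y : ℝ | |y| < |f a| + 1} ∈ nhds (f a) := by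
        have : Continuous fun y : ℝ => |y| := continuous_abs
        exact this.continuousAt.preimage_mem_nhds
          (isOpen_Iio.mem_nhds (by simp : |f a| < |f a| + 1))
      have hV : {y : ℝ | ∃ n ≥ N, y = f (u n)} ∈ map (f ∘ u) atTop := by
        rw [Filter.mem_map]
        filter_upwards [Filter.eventually_ge_atTop N] with n hn
        exact ⟨n, hn, rfl⟩
      obtain ⟨y, hy1, n, hn1, hn2⟩ := clusterPt_iff_nonempty.mp hcp hU hV
      have h3 : |f a| + 1 ≤ (n : ℝ) :=
        le_trans (Nat.le_ceil _) (Nat.cast_le.mpr hn1)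
      have h4 := hu2 n
      rw [hn2] at hy1
      simp only [Set.mem_setOf_eq] at hy1
      linarith
    have hK : IsCompact (closure A) := P1 A hfb
    intro u hu
    obtain ⟨a, ha, hclp⟩ := hA u hu
    have hne : (@nhds E (weakTop E) a ⊓ map u atTop).NeBot := hclp
    have hF : (@nhds E (weakTop E) a ⊓ map u atTop) ≤ Filter.principal (closure A) := by
      refine le_trans inf_le_right (Filter.le_principal_iff.mpr ?_)
      rw [Filter.mem_map]
      exact Filter.Eventually.of_forall fun n => subset_closure (hu n)
    obtain ⟨b, _, hb⟩ := hK.exists_clusterPt hF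
    -- b is a τ-cluster point of u
    have hbτ : (nhds b ⊓ map u atTop).NeBot := (hb.mono inf_le_right).neBot
    -- all functionals agree on a and b
    have hab : ∀ f : E →L[ℝ] ℝ, f a = f b := by
      intro f
      have hbb : (nhds b ⊓ (@nhds E (weakTop E) a ⊓ map u atTop)).NeBot := hb.neBot
      have h1 : (@nhds E (weakTop E) a ⊓ @nhds E (weakTop E) b).NeBot := by
        refine hbb.mono (le_inf (le_trans inf_le_right inf_le_left) ?_)
        exact le_trans inf_le_left (@nhds_mono E τ (weakTop E) b hle)
      exact tendsto_nhds_unique' h1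
        (le_trans (map_mono inf_le_left)
          (@Continuous.tendsto E ℝ (weakTop E) _ f (weak_cont f) a))
        (le_trans (map_mono inf_le_right)
          (@Continuous.tendsto E ℝ (weakTop E) _ f (weak_cont f) b))
    -- a - b lies in the closure of {0}
    have h0 : a - b ∈ closure ({0} : Set E) := by
      by_contra h0
      obtain ⟨f, c, hfc, hc0⟩ := geometric_hahn_banach_point_closed
        ((convex_singleton (0 : E)).closure) isClosed_closure h0
      have h1 : c < f 0 := hc0 0 (subset_closure rfl)
      have h2 : f (a - b) = 0 := by rw [map_sub, hab f, sub_self]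
      simp only [map_zero] at h1
      linarith
    -- hence a ∈ closure {b}
    have hmem : a ∈ closure ({b} : Set E) := by
      have hc : Continuous fun x : E => x + b := continuous_add_right b
      have := image_closure_subset_closure_image (s := ({0} : Set E)) hc
        ⟨a - b, h0, by abel⟩
      simpa using this
    have hspec : (nhds b : Filter E) ≤ nhds a :=
      specializes_iff_mem_closure.mpr hmem
    refine ⟨a, ha, ?_⟩
    exact (hbτ.mono (inf_le_inf_right _ hspec) : (nhds a ⊓ map u atTop).NeBot)
  · -- Part 3
    intro A hA
    refine P1 A fun f hf => hA f ?_
    have := @Continuous.comp E E ℝ τ (weakTop E) _ id f hf hid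
    simpa using this
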